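/- Let k be a field and let f_1, ..., f_n ∈ k[X_1, ..., X_n] be polynomials such that the Jacobian determinant det(∂f_i/∂X_j) is a nonzero constant (an element of k \ {0}). Then the polynomial ring T = k[X_1, ..., X_n] is unramified over the subring S = k[f_1, ..., f_n], and f_1, ..., f_n are algebraically independent over k. -/

import Mathlib

open MvPolynomial

/-- coefficient formula for partial derivative -/
lemma coeff_pderiv_aux {K : Type*} [CommRing K] {n : ℕ} (i : Fin n)
    (P : MvPolynomial (Fin n) K) (m : Fin n →₀ ℕ) :
    coeff m (pderiv i P) = ((m i + 1 : ℕ) : K) * coeff (m + Finsupp.single i 1) P := by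
  induction P using MvPolynomial.induction_on' with
  | add p q hp hq => simp [hp, hq, mul_add]
  | monomial s a =>
    rw [pderiv_monomial, coeff_monomial, coeff_monomial]
    by_cases h : s = m + Finsupp.single i 1
    · subst h
      have h1 : m + Finsupp.single i 1 - Finsupp.single i 1 = m :=
        add_tsub_cancel_right _ _
      rw [if_pos h1]
      simp [Finsupp.add_apply, Finsupp.single_eq_same, mul_comm]
    · rw [if_neg h, mul_zero]
      by_cases h' : s - Finsupp.single i 1 = m
      · rw [if_pos h']
        have hsi : s i = 0 := by
          by_contra hne
          apply h
          have hle : Finsupp.single i 1 ≤ s := by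
            rw [Finsupp.single_le_iff]
            omega
          rw [← h', tsub_add_cancel_of_le hle]
        rw [hsi]
        simp
      · rw [if_neg h']

lemma totalDegree_pderiv_lt_aux {K : Type*} [CommRing K] {n : ℕ} (i : Fin n)
    {P : MvPolynomial (Fin n) K} (h : pderiv i P ≠ 0) :
    (pderiv i P).totalDegree < P.totalDegree := by
  have key : ∀ m ∈ (pderiv i P).support, (m.sum fun _ e => e) < P.totalDegree := by
    intro m hm
    rw [mem_support_iff, coeff_pderiv_aux] at hm
    have hmem : (m + Finsupp.single i 1) ∈ P.support := by
      rw [mem_support_iff]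
      intro h0
      rw [h0, mul_zero] at hm
      exact hm rfl
    have hle := le_totalDegree hmem
    have hsum : ((m + Finsupp.single i 1).sum fun _ e => e) =
        (m.sum fun _ e => e) + 1 := by
      rw [Finsupp.sum_add_index' (fun _ => rfl) (fun _ _ _ => rfl),
        Finsupp.sum_single_index rfl]
    omega
  obtain ⟨m, hm⟩ := support_nonempty.mpr h
  have h0 : 0 < P.totalDegree := lt_of_le_of_lt (Nat.zero_le _) (key m hm)
  rw [totalDegree]
  exact (Finset.sup_lt_iff h0).mpr key

lemma derivation_sum_pderiv {K : Type*} [CommRing K] {n : ℕ} {R M : Type*} [CommRing R]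
    [Algebra R (MvPolynomial (Fin n) K)] [AddCommGroup M]
    [Module (MvPolynomial (Fin n) K) M] [Module R M]
    [IsScalarTower R (MvPolynomial (Fin n) K) M]
    (D : Derivation R (MvPolynomial (Fin n) K) M)
    (hC : ∀ a : K, D (C a) = 0) (p : MvPolynomial (Fin n) K) :
    D p = ∑ j, pderiv j p • D (X j) := by
  induction p using MvPolynomial.induction_on with
  | C a => simp [hC]
  | add p q hp hq => simp [hp, hq, Finset.sum_add_distrib, add_smul]
  | mul_X p i hp =>
    rw [D.leibniz, hp]
    have key : ∀ j : Fin n, pderiv j (p * X i) • D (X j) =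
        (X i : MvPolynomial (Fin n) K) • (pderiv j p • D (X j)) +
          (p * pderiv j (X i)) • D (X j) := by
      intro j
      rw [pderiv_mul, add_smul, mul_comm (pderiv j p), mul_smul]
    have h2 : ∑ j : Fin n, (p * pderiv j (X i)) • D (X j) = p • D (X i) := by
      rw [Finset.sum_eq_single i (fun j _ hj => by
          rw [pderiv_X_of_ne (Ne.symm hj), mul_zero, zero_smul]) (by simp),
        pderiv_X_self, mul_one]
    rw [Finset.sum_congr rfl fun j _ => key j, Finset.sum_add_distrib, ← Finset.smul_sum, h2,
      add_comm]

lemma pderiv_aeval_eq {K : Type*} [CommRing K] {n : ℕ}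
    (g : Fin n → MvPolynomial (Fin n) K) (P : MvPolynomial (Fin n) K) (j : Fin n) :
    pderiv j (aeval g P) = ∑ i, aeval g (pderiv i P) * pderiv j (g i) := by
  induction P using MvPolynomial.induction_on with
  | C a => simp
  | add p q hp hq => simp only [map_add, hp, hq, add_mul, Finset.sum_add_distrib]
  | mul_X p i hp =>
    rw [map_mul, aeval_X, pderiv_mul, hp]
    have key : ∀ i' : Fin n, aeval g (pderiv i' (p * X i)) * pderiv j (g i') =
        (aeval g (pderiv i' p) * pderiv j (g i')) * g i +
          (aeval g p * aeval g (pderiv i' (X i : MvPolynomial (Fin n) K))) * pderiv j (g i') := by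
      intro i'
      rw [pderiv_mul, map_add, map_mul, map_mul, aeval_X, add_mul]
      ring
    have h2 : ∑ i' : Fin n, (aeval g p * aeval g (pderiv i' (X i : MvPolynomial (Fin n) K))) * pderiv j (g i') =
        aeval g p * pderiv j (g i) := by
      rw [Finset.sum_eq_single i (fun i' _ hi' => by
          rw [pderiv_X_of_ne (Ne.symm hi')]; simp) (by simp)]
      rw [pderiv_X_self]
      simp
    rw [Finset.sum_congr rfl fun i' _ => key i', Finset.sum_add_distrib, h2,
      ← Finset.sum_mul]

lemma aeval_pderiv_eq_zero {K : Type*} [Field K] {n : ℕ}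
    (g : Fin n → MvPolynomial (Fin n) K) (c : K) (hc : c ≠ 0)
    (hdet : (Matrix.of fun i j => pderiv j (g i)).det = C c)
    (P : MvPolynomial (Fin n) K) (hP : aeval g P = 0) (i : Fin n) :
    aeval g (pderiv i P) = 0 := by
  classical
  set A : Matrix (Fin n) (Fin n) (MvPolynomial (Fin n) K) :=
    Matrix.of fun i j => pderiv j (g i) with hA
  set w : Fin n → MvPolynomial (Fin n) K := fun i => aeval g (pderiv i P) with hw
  have hW : Matrix.vecMul w A = 0 := by
    funext j
    have := pderiv_aeval_eq g P j
    rw [hP, map_zero] at this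
    simpa [Matrix.vecMul, dotProduct, hA, hw] using this.symm
  have hdetu : IsUnit A.det := by
    rw [hdet]
    exact (isUnit_iff_ne_zero.2 hc).map (C : K →+* MvPolynomial (Fin n) K)
  have : w = 0 := by
    calc w = Matrix.vecMul w 1 := (Matrix.vecMul_one w).symm
      _ = Matrix.vecMul w (A * A⁻¹) := by rw [Matrix.mul_nonsing_inv _ hdetu]
      _ = Matrix.vecMul (Matrix.vecMul w A) A⁻¹ := (Matrix.vecMul_vecMul _ _ _).symm
      _ = 0 := by rw [hW, Matrix.zero_vecMul]
  exact congrFun this i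

lemma eq_C_of_support_zero {K : Type*} [CommRing K] {n : ℕ} {P : MvPolynomial (Fin n) K}
    (h : ∀ α ∈ P.support, α = 0) : P = C (coeff 0 P) := by
  ext α
  rw [coeff_C]
  by_cases hα : (0 : Fin n →₀ ℕ) = α
  · rw [if_pos hα, hα]
  · rw [if_neg hα]
    by_contra hne
    exact hα ((h α (mem_support_iff.mpr hne)).symm)

lemma aeval_eq_zero_of_jacobian {K : Type*} [Field K] [PerfectField K] {n : ℕ}
    (g : Fin n → MvPolynomial (Fin n) K) (c : K) (hc : c ≠ 0)
    (hdet : (Matrix.of fun i j => pderiv j (g i)).det = C c) :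
    ∀ P : MvPolynomial (Fin n) K, aeval g P = 0 → P = 0 := by
  suffices H : ∀ N : ℕ, ∀ P : MvPolynomial (Fin n) K,
      P.totalDegree ≤ N → aeval g P = 0 → P = 0 by
    exact fun P hP => H P.totalDegree P le_rfl hP
  intro N
  induction N using Nat.strong_induction_on with
  | _ N IH =>
    intro P hdeg hP0
    by_contra hne
    -- all partial derivatives vanish
    have hz : ∀ i, pderiv i P = 0 := by
      intro i
      by_contra hzi
      have hlt := totalDegree_pderiv_lt_aux i hzi
      exact hzi (IH (pderiv i P).totalDegree (lt_of_lt_of_le hlt hdeg) _ le_rfl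
        (aeval_pderiv_eq_zero g c hc hdet P hP0 i))
    -- coefficient consequence
    have hco : ∀ (α : Fin n →₀ ℕ) (i : Fin n), ((α i : ℕ) : K) * coeff α P = 0 := by
      intro α i
      by_cases hai : α i = 0
      · rw [hai]; simp
      · have hm : α - Finsupp.single i 1 + Finsupp.single i 1 = α := by
          apply tsub_add_cancel_of_le
          rw [Finsupp.single_le_iff]
          omega
        have := coeff_pderiv_aux i P (α - Finsupp.single i 1)
        rw [hz i, hm] at this
        have hcoe : ((α - Finsupp.single i 1 : Fin n →₀ ℕ)) i + 1 = α i := by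
          rw [Finsupp.tsub_apply, Finsupp.single_eq_same]
          omega
        rw [hcoe] at this
        rw [← this, coeff_zero]
    -- dispose of the constant case
    by_cases htd : P.totalDegree = 0
    · have hsupp : ∀ α ∈ P.support, α = 0 := by
        intro α hα
        have := (totalDegree_eq_zero_iff (Fin n) P).mp htd α hα
        ext i; exact this i
      have hPC := eq_C_of_support_zero hsupp
      rw [hPC] at hP0
      rw [aeval_C] at hP0
      have : coeff 0 P = 0 := by
        have := hP0
        rwa [MvPolynomial.algebraMap_eq, C_eq_zero] at this
      rw [hPC, this, map_zero] at hne
      exact hne rfl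
    have hpos : 0 < P.totalDegree := Nat.pos_of_ne_zero htd
    -- characteristic analysis
    haveI : CharP K (ringChar K) := ringChar.charP K
    rcases CharP.char_is_prime_or_zero K (ringChar K) with hp | hp0
    · -- positive characteristic p
      set p := ringChar K with hpdef
      haveI : Fact p.Prime := ⟨hp⟩
      haveI : ExpChar K p := ExpChar.prime hp
      have hdvd : ∀ α ∈ P.support, ∀ i, p ∣ α i := by
        intro α hα i
        have h1 := hco α i
        have h2 : coeff α P ≠ 0 := mem_support_iff.mp hα
        have h3 : ((α i : ℕ) : K) = 0 := by
          rcases mul_eq_zero.mp h1 with h | h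
          · exact h
          · exact absurd h h2
        exact (CharP.cast_eq_zero_iff K p _).mp h3
      set mr : (Fin n →₀ ℕ) → (Fin n →₀ ℕ) :=
        fun α => α.mapRange (· / p) (Nat.zero_div p) with hmr
      set Q : MvPolynomial (Fin n) K := ∑ α ∈ P.support,
        monomial (mr α) ((frobeniusEquiv K p).symm (coeff α P)) with hQ
      have hQp : Q ^ p = P := by
        rw [hQ, sum_pow_char]
        have : ∀ α ∈ P.support,
            (monomial (mr α) ((frobeniusEquiv K p).symm (coeff α P))) ^ p =
              monomial α (coeff α P) := by
          intro α hα
          have hsm : p • mr α = α := by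
            ext i
            rw [Finsupp.smul_apply, hmr, Finsupp.mapRange_apply, smul_eq_mul]
            exact Nat.mul_div_cancel' (hdvd α hα i)
          have hfr : (frobeniusEquiv K p).symm (coeff α P) ^ p = coeff α P := by
            have h5 : (frobeniusEquiv K p).symm (coeff α P) ^ p =
                frobenius K p ((frobeniusEquiv K p).symm (coeff α P)) := rfl
            rw [h5]
            exact (frobeniusEquiv K p).apply_symm_apply _
          rw [monomial_pow, hsm, hfr]
        rw [Finset.sum_congr rfl this, support_sum_monomial_coeff]
      have hQne : Q ≠ 0 := by
        intro h
        rw [h, zero_pow hp.ne_zero] at hQp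
        exact hne hQp.symm
      have hQeval : aeval g Q = 0 := by
        have : (aeval g Q) ^ p = 0 := by
          rw [← map_pow, hQp, hP0]
        exact pow_eq_zero_iff hp.ne_zero |>.mp this
      have hQdeg : Q.totalDegree < P.totalDegree := by
        rw [hQ]
        refine lt_of_le_of_lt (totalDegree_finset_sum _ _) ?_
        rw [Finset.sup_lt_iff (by exact hpos)]
        intro α hα
        refine lt_of_le_of_lt (totalDegree_monomial_le _ _) ?_
        show ((mr α).sum fun _ e => e) < P.totalDegree
        have hmul : ((mr α).sum fun _ e => e) * p = α.sum fun _ e => e := by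
          rw [hmr]
          rw [Finsupp.sum_mapRange_index (fun _ => rfl)]
          rw [Finsupp.sum, Finsupp.sum, Finset.sum_mul]
          exact Finset.sum_congr rfl fun i hi => Nat.div_mul_cancel (hdvd α hα i)
        have hαle : (α.sum fun _ e => e) ≤ P.totalDegree := le_totalDegree hα
        have h2 := hp.two_le
        rcases Nat.eq_zero_or_pos (α.sum fun _ e => e) with hs | hs
        · have : ((mr α).sum fun _ e => e) = 0 := by
            rcases Nat.mul_eq_zero.mp (hmul.trans hs) with h | h
            · exact h
            · omega
          omega
        · have h3 : ((mr α).sum fun _ e => e) * 2 ≤ ((mr α).sum fun _ e => e) * p :=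
            Nat.mul_le_mul_left _ h2
          omega
      exact hQne (IH Q.totalDegree (lt_of_lt_of_le hQdeg hdeg) Q le_rfl hQeval)
    · -- characteristic zero
      haveI : CharP K 0 := hp0 ▸ (ringChar.charP K)
      haveI : CharZero K := CharP.charP_to_charZero K
      have hsupp : ∀ α ∈ P.support, α = 0 := by
        intro α hα
        have hcα : coeff α P ≠ 0 := mem_support_iff.mp hα
        ext i
        have h1 := hco α i
        rcases mul_eq_zero.mp h1 with h | h
        · exact_mod_cast Nat.cast_eq_zero.mp h
        · exact absurd h hcα
      have := eq_C_of_support_zero hsupp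
      rw [this] at htd
      rcases Nat.eq_zero_or_pos P.totalDegree with h | h
      · exact htd (by rw [this]; exact totalDegree_C _)
      · exact htd (by rw [this]; exact totalDegree_C _)

set_option maxHeartbeats 1000000 in
lemma formallyUnramified_aux (n : ℕ) (k : Type*) [Field k]
    (f : Fin n → MvPolynomial (Fin n) k) (c : k) (hc : c ≠ 0)
    (hdet : (Matrix.of fun i j => pderiv j (f i)).det = C c) :
    Algebra.FormallyUnramified (Algebra.adjoin k (Set.range f)) (MvPolynomial (Fin n) k) := by
  classical
  set S := Algebra.adjoin k (Set.range f) with hS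
  set D := KaehlerDifferential.D S (MvPolynomial (Fin n) k) with hD
  have hCc : ∀ a : k, D (C a) = 0 := by
    intro a
    have hmem : (C a : MvPolynomial (Fin n) k) ∈ S := by
      have h : (C a : MvPolynomial (Fin n) k) = algebraMap k (MvPolynomial (Fin n) k) a := rfl
      rw [h]
      exact Subalgebra.algebraMap_mem S a
    have h2 : (C a : MvPolynomial (Fin n) k) = algebraMap S (MvPolynomial (Fin n) k) ⟨C a, hmem⟩ :=
      rfl
    rw [h2, Derivation.map_algebraMap]
  have hrows : ∀ i, ∑ j, pderiv j (f i) • D (X j) = 0 := by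
    intro i
    have hmem : f i ∈ S := Algebra.subset_adjoin ⟨i, rfl⟩
    have h1 : f i = algebraMap S (MvPolynomial (Fin n) k) ⟨f i, hmem⟩ := rfl
    rw [← derivation_sum_pderiv D hCc (f i), h1, Derivation.map_algebraMap]
  set A : Matrix (Fin n) (Fin n) (MvPolynomial (Fin n) k) :=
    Matrix.of fun i j => pderiv j (f i) with hA
  have hX : ∀ l, D (X l) = 0 := by
    intro l
    have h1 : (C c : MvPolynomial (Fin n) k) • D (X l) = 0 := by
      have e1 : (C c : MvPolynomial (Fin n) k) • D (X l) = A.det • D (X l) := by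
        rw [← hdet]
      have e2 : A.det • D (X l) = ∑ j, ((A.adjugate * A) l j) • D (X j) := by
        rw [Matrix.adjugate_mul]
        rw [Finset.sum_eq_single l (fun j _ hj => by
            rw [Matrix.smul_apply, Matrix.one_apply_ne (Ne.symm hj), smul_eq_mul,
              mul_zero, zero_smul]) (fun h => absurd (Finset.mem_univ l) h)]
        rw [Matrix.smul_apply, Matrix.one_apply_eq, smul_eq_mul, mul_one]
      have e3 : ∑ j, ((A.adjugate * A) l j) • D (X j) =
          ∑ j, (∑ i, A.adjugate l i * A i j) • D (X j) := by
        simp only [Matrix.mul_apply]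
      have e4 : ∑ j, (∑ i, A.adjugate l i * A i j) • D (X j) =
          ∑ i, A.adjugate l i • (∑ j, A i j • D (X j)) := by
        calc ∑ j, (∑ i, A.adjugate l i * A i j) • D (X j)
            = ∑ j, ∑ i, (A.adjugate l i * A i j) • D (X j) :=
              Finset.sum_congr rfl fun j _ => Finset.sum_smul
          _ = ∑ i, ∑ j, (A.adjugate l i * A i j) • D (X j) := Finset.sum_comm
          _ = ∑ i, A.adjugate l i • (∑ j, A i j • D (X j)) := by
              refine Finset.sum_congr rfl fun i _ => ?_
              rw [Finset.smul_sum]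
              exact Finset.sum_congr rfl fun j _ => mul_smul _ _ _
      have e5 : ∑ i, A.adjugate l i • (∑ j, A i j • D (X j)) = 0 := by
        refine Finset.sum_eq_zero fun i _ => ?_
        have h6 : ∑ j, A i j • D (X j) = 0 := hrows i
        rw [h6, smul_zero]
      rw [e1, e2, e3, e4, e5]
    have h2 : ((C c⁻¹ : MvPolynomial (Fin n) k) * C c) • D (X l) = 0 := by
      rw [mul_smul, h1, smul_zero]
    rwa [← C_mul, inv_mul_cancel₀ hc, C_1, one_smul] at h2
  have hDzero : ∀ p : MvPolynomial (Fin n) k, D p = 0 := by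
    intro p
    rw [derivation_sum_pderiv D hCc]
    exact Finset.sum_eq_zero fun j _ => by rw [hX j, smul_zero]
  constructor
  have htop : (⊤ : Submodule (MvPolynomial (Fin n) k)
      (Ω[(MvPolynomial (Fin n) k)⁄S])) = ⊥ := by
    rw [← KaehlerDifferential.span_range_derivation]
    refine le_antisymm ?_ bot_le
    rw [Submodule.span_le]
    rintro x ⟨p, rfl⟩
    rw [hDzero p]
    exact Submodule.zero_mem ⊥
  have h0 : ∀ x : Ω[(MvPolynomial (Fin n) k)⁄S], x = 0 := by
    intro x
    have hx : x ∈ (⊤ : Submodule (MvPolynomial (Fin n) k) (Ω[(MvPolynomial (Fin n) k)⁄S])) :=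
      trivial
    rw [htop] at hx
    simpa using hx
  exact ⟨fun a b => by rw [h0 a, h0 b]⟩

lemma algebraicIndependent_aux (n : ℕ) (k : Type*) [Field k]
    (f : Fin n → MvPolynomial (Fin n) k) (c : k) (hc : c ≠ 0)
    (hdet : (Matrix.of fun i j => pderiv j (f i)).det = C c) :
    AlgebraicIndependent k f := by
  rw [algebraicIndependent_iff]
  intro P hPf
  set K := AlgebraicClosure k
  set φ := algebraMap k K with hφ
  set g : Fin n → MvPolynomial (Fin n) K := fun i => map φ (f i) with hg
  have hdet' : (Matrix.of fun i j => pderiv j (g i)).det = C (φ c) := by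
    have hmap : (Matrix.of fun i j => pderiv j (g i)) =
        (Matrix.of fun i j => pderiv j (f i)).map (map φ) := by
      ext i j
      simp only [Matrix.map_apply, Matrix.of_apply, hg]
      rw [pderiv_map]
    rw [hmap, ← RingHom.mapMatrix_apply, ← RingHom.map_det, hdet, map_C]
  have hφc : φ c ≠ 0 := fun h => hc (by
    apply RingHom.injective φ
    rw [h, map_zero])
  have hψ : aeval g (map φ P) = 0 := by
    rw [aeval_map_algebraMap]
    have hcomp : (mapAlgHom (Algebra.ofId k K) : MvPolynomial (Fin n) k →ₐ[k]
        MvPolynomial (Fin n) K).comp (aeval f) = aeval g := by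
      rw [comp_aeval]
      rfl
    calc (aeval g) P = (mapAlgHom (Algebra.ofId k K)) (aeval f P) := by
          rw [← hcomp]; rfl
      _ = 0 := by rw [hPf, map_zero]
  have hmap0 := aeval_eq_zero_of_jacobian g (φ c) hφc hdet' (map φ P) hψ
  exact MvPolynomial.map_injective φ (RingHom.injective φ) (by rw [hmap0, map_zero])

/-- Let `k` be a field and `f 1, ..., f n` polynomials in `k[X_1, ..., X_n]` whose Jacobian
determinant is a nonzero constant.  Then `T = k[X_1, ..., X_n]` is unramified over the
subring `S = k[f_1, ..., f_n]`, and `f 1, ..., f n` are algebraically independent over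
`k`. -/
theorem unramified_of_jacobian_isUnit
    (n : ℕ) (k : Type*) [Field k]
    (f : Fin n → MvPolynomial (Fin n) k) (c : k) (hc : c ≠ 0)
    (hdet : (Matrix.of fun i j => pderiv j (f i)).det = C c) :
    (Algebra.FiniteType (Algebra.adjoin k (Set.range f)) (MvPolynomial (Fin n) k) ∧
      Algebra.FormallyUnramified (Algebra.adjoin k (Set.range f)) (MvPolynomial (Fin n) k)) ∧
    AlgebraicIndependent k f := by
  refine ⟨⟨?_, formallyUnramified_aux n k f c hc hdet⟩,
    algebraicIndependent_aux n k f c hc hdet⟩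
  haveI : Algebra.FiniteType k (MvPolynomial (Fin n) k) :=
    inferInstance
  exact Algebra.FiniteType.of_restrictScalars_finiteType k
    (Algebra.adjoin k (Set.range f)) (MvPolynomial (Fin n) k)
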